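/- Assume M(x) = Λ(x) Y(X) with Λ(x) k(X,X) Λ(x)^T invertible. Then M_A(x) - M_full(x) = -k(x,X) Δ(x) Y(X) and v_A(x) - v_full(x) = k(x,X) Δ(x) k(X,x), where Δ(x) = k(X,X)^{-1} - Λ(x)^T (Λ(x) k(X,X) Λ(x)^T)^{-1} Λ(x). Consequently there exist constants λ, μ ≥ 0 (depending on Δ(x)) such that |M_A(x) - M_full(x)| ≤ λ ||k(X,x)|| ||Y(X)|| and |v_A(x) - v_full(x)| ≤ μ ||k(X,x)||^2. -/

import Mathlib

open MeasureTheory Matrix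

lemma aux_int_mul {Ω : Type*} [MeasurableSpace Ω] {μ : Measure Ω} {f g : Ω → ℝ}
    (hf : MemLp f 2 μ) (hg : MemLp g 2 μ) : Integrable (fun x => f x * g x) μ := by
  have h1 := (hf.add hg).integrable_sq
  have h2 := hf.integrable_sq
  have h3 := hg.integrable_sq
  have : (fun x => f x * g x) = fun x => (((f + g) x) ^ 2 - f x ^ 2 - g x ^ 2) / 2 := by
    funext x; simp [Pi.add_apply]; ring
  rw [this]
  exact ((h1.sub h2).sub h3).div_const 2

lemma aux_dot_bound {n : ℕ} (A : Matrix (Fin n) (Fin n) ℝ) (u v : Fin n → ℝ) :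
    |u ⬝ᵥ (A *ᵥ v)| ≤ (∑ i, ∑ j, |A i j|) * ‖u‖ * ‖v‖ := by
  simp only [dotProduct, mulVec]
  calc |∑ i, u i * ∑ j, A i j * v j| ≤ ∑ i, |u i * ∑ j, A i j * v j| :=
        Finset.abs_sum_le_sum_abs _ _
    _ ≤ ∑ i, ∑ j, |u i| * (|A i j| * |v j|) := by
        apply Finset.sum_le_sum; intro i _
        rw [abs_mul]
        calc |u i| * |∑ j, A i j * v j| ≤ |u i| * ∑ j, |A i j| * |v j| := by
              apply mul_le_mul_of_nonneg_left _ (abs_nonneg _)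
              refine le_trans (Finset.abs_sum_le_sum_abs _ _) ?_
              apply Finset.sum_le_sum; intro j _; rw [abs_mul]
          _ = ∑ j, |u i| * (|A i j| * |v j|) := Finset.mul_sum _ _ _
    _ ≤ ∑ i, ∑ j, ‖u‖ * (|A i j| * ‖v‖) := by
        apply Finset.sum_le_sum; intro i _
        apply Finset.sum_le_sum; intro j _
        have hu : |u i| ≤ ‖u‖ := by
          simpa [Real.norm_eq_abs] using norm_le_pi_norm u i
        have hv : |v j| ≤ ‖v‖ := by
          simpa [Real.norm_eq_abs] using norm_le_pi_norm v j
        exact mul_le_mul hu (mul_le_mul_of_nonneg_left hv (abs_nonneg _))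
          (by positivity) (norm_nonneg _)
    _ = (∑ i, ∑ j, |A i j|) * ‖u‖ * ‖v‖ := by
        rw [Finset.sum_mul, Finset.sum_mul]
        apply Finset.sum_congr rfl; intro i _
        rw [Finset.sum_mul, Finset.sum_mul]
        apply Finset.sum_congr rfl; intro j _; ring

lemma aux_expand {Ω : Type*} [MeasurableSpace Ω] (μ : Measure Ω) {n : ℕ}
    (Yx : Ω → ℝ) (YX : Ω → Fin n → ℝ)
    (hYL2 : MemLp Yx 2 μ) (hXL2 : ∀ i, MemLp (fun ω => YX ω i) 2 μ)
    (K : Matrix (Fin n) (Fin n) ℝ) (hK : ∀ i j, K i j = ∫ ω, YX ω i * YX ω j ∂μ)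
    (kx : Fin n → ℝ) (hkx : ∀ i, kx i = ∫ ω, Yx ω * YX ω i ∂μ)
    (kxx : ℝ) (hkxx : kxx = ∫ ω, Yx ω ^ 2 ∂μ) (a : Fin n → ℝ) :
    ∫ ω, (Yx ω - a ⬝ᵥ YX ω) ^ 2 ∂μ = kxx - 2 * (a ⬝ᵥ kx) + a ⬝ᵥ (K *ᵥ a) := by
  have key : ∀ ω, (Yx ω - a ⬝ᵥ YX ω) ^ 2 =
      Yx ω ^ 2 - (∑ i, (2 * a i) * (Yx ω * YX ω i)) +
        ∑ i, ∑ j, (a i * a j) * (YX ω i * YX ω j) := by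
    intro ω
    simp only [dotProduct]
    rw [sub_sq]
    congr 1
    · congr 1
      rw [Finset.mul_sum]
      apply Finset.sum_congr rfl; intro i _; ring
    · rw [pow_two, Finset.sum_mul_sum]
      apply Finset.sum_congr rfl; intro i _
      apply Finset.sum_congr rfl; intro j _; ring
  have hI2 : ∀ i : Fin n, Integrable (fun ω => (2 * a i) * (Yx ω * YX ω i)) μ :=
    fun i => (aux_int_mul hYL2 (hXL2 i)).const_mul _
  have hI3 : ∀ i j : Fin n, Integrable (fun ω => (a i * a j) * (YX ω i * YX ω j)) μ :=
    fun i j => (aux_int_mul (hXL2 i) (hXL2 j)).const_mul _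
  have hS2 : Integrable (fun ω => ∑ i, (2 * a i) * (Yx ω * YX ω i)) μ :=
    integrable_finset_sum _ (fun i _ => hI2 i)
  have hS3 : Integrable (fun ω => ∑ i, ∑ j, (a i * a j) * (YX ω i * YX ω j)) μ :=
    integrable_finset_sum _ (fun i _ => integrable_finset_sum _ (fun j _ => hI3 i j))
  calc ∫ ω, (Yx ω - a ⬝ᵥ YX ω) ^ 2 ∂μ
      = ∫ ω, (Yx ω ^ 2 - (∑ i, (2 * a i) * (Yx ω * YX ω i)) +
          ∑ i, ∑ j, (a i * a j) * (YX ω i * YX ω j)) ∂μ := by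
        apply integral_congr_ae; filter_upwards with ω; exact key ω
    _ = (∫ ω, Yx ω ^ 2 ∂μ) - (∫ ω, ∑ i, (2 * a i) * (Yx ω * YX ω i) ∂μ) +
          ∫ ω, ∑ i, ∑ j, (a i * a j) * (YX ω i * YX ω j) ∂μ := by
        have hsub : Integrable (fun ω => Yx ω ^ 2 - ∑ i, (2 * a i) * (Yx ω * YX ω i)) μ :=
          hYL2.integrable_sq.sub hS2
        rw [integral_add hsub hS3, integral_sub hYL2.integrable_sq hS2]
    _ = kxx - 2 * (a ⬝ᵥ kx) + a ⬝ᵥ (K *ᵥ a) := by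
        congr 1
        · congr 1
          · exact hkxx.symm
          · rw [integral_finset_sum _ (fun i _ => hI2 i)]
            simp only [dotProduct, Finset.mul_sum]
            apply Finset.sum_congr rfl; intro i _
            rw [integral_const_mul, ← hkx i]; ring
        · rw [integral_finset_sum _ (fun i _ => integrable_finset_sum _ (fun j _ => hI3 i j))]
          simp only [dotProduct, mulVec]
          apply Finset.sum_congr rfl; intro i _
          rw [integral_finset_sum _ (fun j _ => hI3 i j), Finset.mul_sum]
          apply Finset.sum_congr rfl; intro j _
          rw [integral_const_mul, ← hK i j]; ring

lemma aux_mv_dot {m n : ℕ} (A : Matrix (Fin m) (Fin n) ℝ) (u : Fin n → ℝ) (v : Fin m → ℝ) :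
    (A *ᵥ u) ⬝ᵥ v = u ⬝ᵥ (Aᵀ *ᵥ v) := by
  rw [Matrix.dotProduct_mulVec, Matrix.vecMul_transpose, dotProduct_comm]

/-- For linear sub-models `M(x) = Λ Y(X)` with `Λ K Λᵀ` invertible, the differences between
the aggregated and full models are `M_A - M_full = -k(x,X)ᵀ Δ Y(X)` and
`v_A - v_full = k(x,X)ᵀ Δ k(X,x)` with `Δ = K⁻¹ - Λᵀ (Λ K Λᵀ)⁻¹ Λ`; consequently there are
constants `λ, μ ≥ 0` with `|M_A - M_full| ≤ λ ‖k(X,x)‖ ‖Y(X)‖` and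
`|v_A - v_full| ≤ μ ‖k(X,x)‖²`. -/
theorem stmt_12 {Ω : Type*} [MeasurableSpace Ω] (μ : Measure Ω) [IsProbabilityMeasure μ]
    {n q : ℕ} (Yx : Ω → ℝ) (YX : Ω → Fin n → ℝ)
    (hYc : ∫ ω, Yx ω ∂μ = 0) (hXc : ∀ i, ∫ ω, YX ω i ∂μ = 0)
    (hYL2 : MemLp Yx 2 μ) (hXL2 : ∀ i, MemLp (fun ω => YX ω i) 2 μ)
    (K : Matrix (Fin n) (Fin n) ℝ) (hK : ∀ i j, K i j = ∫ ω, YX ω i * YX ω j ∂μ)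
    (hKinv : IsUnit K.det)
    (kx : Fin n → ℝ) (hkx : ∀ i, kx i = ∫ ω, Yx ω * YX ω i ∂μ)
    (kxx : ℝ) (hkxx : kxx = ∫ ω, Yx ω ^ 2 ∂μ)
    (L : Matrix (Fin q) (Fin n) ℝ) (hinv : IsUnit (L * K * Lᵀ).det)
    (MA Mfull : Ω → ℝ)
    (hMA : ∀ ω, MA ω = (L *ᵥ kx) ⬝ᵥ ((L * K * Lᵀ)⁻¹ *ᵥ (L *ᵥ YX ω)))
    (hMfull : ∀ ω, Mfull ω = kx ⬝ᵥ (K⁻¹ *ᵥ YX ω))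
    (Δ : Matrix (Fin n) (Fin n) ℝ)
    (hΔ : Δ = K⁻¹ - Lᵀ * (L * K * Lᵀ)⁻¹ * L)
    (vA vfull : ℝ)
    (hvA : vA = ∫ ω, (Yx ω - MA ω) ^ 2 ∂μ)
    (hvfull : vfull = ∫ ω, (Yx ω - Mfull ω) ^ 2 ∂μ) :
    (∀ ω, MA ω - Mfull ω = -(kx ⬝ᵥ (Δ *ᵥ YX ω))) ∧
    vA - vfull = kx ⬝ᵥ (Δ *ᵥ kx) ∧
    ∃ lam ≥ (0 : ℝ), ∃ mu ≥ (0 : ℝ),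
      (∀ ω, |MA ω - Mfull ω| ≤ lam * ‖kx‖ * ‖YX ω‖) ∧
      |vA - vfull| ≤ mu * ‖kx‖ ^ 2 := by
  set B : Matrix (Fin q) (Fin q) ℝ := (L * K * Lᵀ)⁻¹ with hB
  set N : Matrix (Fin n) (Fin n) ℝ := Lᵀ * B * L with hN
  -- symmetry facts
  have hKsymm : Kᵀ = K := by
    ext i j; simp only [transpose_apply, hK]
    congr 1; funext ω; ring
  have hBsymm : Bᵀ = B := by
    rw [hB, Matrix.transpose_nonsing_inv]
    congr 1
    rw [Matrix.transpose_mul, Matrix.transpose_mul, Matrix.transpose_transpose, hKsymm,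
      Matrix.mul_assoc]
  have hNsymm : Nᵀ = N := by
    rw [hN, Matrix.transpose_mul, Matrix.transpose_mul, Matrix.transpose_transpose, hBsymm,
      Matrix.mul_assoc]
  -- rewrite MA, Mfull as dot products with vectors
  have hMA' : ∀ ω, MA ω = kx ⬝ᵥ (N *ᵥ YX ω) := by
    intro ω
    rw [hMA, aux_mv_dot, Matrix.mulVec_mulVec, Matrix.mulVec_mulVec, ← hN]
  -- part 1
  have part1 : ∀ ω, MA ω - Mfull ω = -(kx ⬝ᵥ (Δ *ᵥ YX ω)) := by
    intro ω
    rw [hMA' ω, hMfull ω, hΔ, Matrix.sub_mulVec, dotProduct_sub]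
    ring
  -- part 2
  have hNKN : N * K * N = N := by
    rw [hN]
    have : Lᵀ * B * L * K * (Lᵀ * B * L) = Lᵀ * (B * (L * K * Lᵀ) * B) * L := by
      simp only [Matrix.mul_assoc]
    rw [this, hB, Matrix.nonsing_inv_mul _ hinv, Matrix.one_mul]
  have hKK : K⁻¹ * K * K⁻¹ = K⁻¹ := by
    rw [Matrix.nonsing_inv_mul _ hKinv, Matrix.one_mul]
  have hKisymm : (K⁻¹)ᵀ = K⁻¹ := by
    rw [Matrix.transpose_nonsing_inv, hKsymm]
  -- express the two variances
  have hvA' : vA = kxx - 2 * ((N *ᵥ kx) ⬝ᵥ kx) + (N *ᵥ kx) ⬝ᵥ (K *ᵥ (N *ᵥ kx)) := by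
    rw [hvA, ← aux_expand μ Yx YX hYL2 hXL2 K hK kx hkx kxx hkxx (N *ᵥ kx)]
    apply integral_congr_ae; filter_upwards with ω
    have h : (N *ᵥ kx) ⬝ᵥ YX ω = MA ω := by rw [aux_mv_dot, hNsymm, hMA' ω]
    rw [h]
  have hvf' : vfull = kxx - 2 * ((K⁻¹ *ᵥ kx) ⬝ᵥ kx) + (K⁻¹ *ᵥ kx) ⬝ᵥ (K *ᵥ (K⁻¹ *ᵥ kx)) := by
    rw [hvfull, ← aux_expand μ Yx YX hYL2 hXL2 K hK kx hkx kxx hkxx (K⁻¹ *ᵥ kx)]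
    apply integral_congr_ae; filter_upwards with ω
    have h : (K⁻¹ *ᵥ kx) ⬝ᵥ YX ω = Mfull ω := by rw [aux_mv_dot, hKisymm, hMfull ω]
    rw [h]
  have quad : ∀ P : Matrix (Fin n) (Fin n) ℝ, Pᵀ = P → P * K * P = P →
      (P *ᵥ kx) ⬝ᵥ (K *ᵥ (P *ᵥ kx)) = kx ⬝ᵥ (P *ᵥ kx) := by
    intro P hPs hPK
    rw [aux_mv_dot, hPs, Matrix.mulVec_mulVec, Matrix.mulVec_mulVec, hPK]
  have part2 : vA - vfull = kx ⬝ᵥ (Δ *ᵥ kx) := by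
    rw [hvA', hvf', quad N hNsymm hNKN, quad K⁻¹ hKisymm hKK, hΔ, Matrix.sub_mulVec,
      dotProduct_sub, dotProduct_comm (N *ᵥ kx) kx, dotProduct_comm (K⁻¹ *ᵥ kx) kx]
    ring
  -- part 3
  refine ⟨part1, part2, ∑ i, ∑ j, |Δ i j|, ?_, ∑ i, ∑ j, |Δ i j|, ?_, ?_, ?_⟩
  · positivity
  · positivity
  · intro ω
    rw [part1 ω, abs_neg]
    exact aux_dot_bound Δ kx (YX ω)
  · rw [part2, sq]
    rw [← mul_assoc]
    exact aux_dot_bound Δ kx kx
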